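/- arXiv:1509.01696 — 4 statements merged into one kernel-verified Lean document; each statement's English description precedes it below -/
import Mathlib

section
/- The planar rate-induced tipping system has a reflection/time-reversal symmetry about the point (x_c, λ_c) = (−λ_max/2, λ_max/2): if (x, ℓ) : ℝ → ℝ² is differentiable and satisfies x'(t) = (x(t) + ℓ(t))² − 1 and ℓ'(t) = ε·ℓ(t)·(λ_max − ℓ(t)) for all t, then the pair (X, L) defined by X(t) = −λ_max − x(−t) and L(t) = λ_max − ℓ(−t) satisfies the same system: X'(t) = (X(t) + L(t))² − 1 and L'(t) = ε·L(t)·(λ_max − L(t)) for all t. (For λ_max = 3 this is the reflection about (x_c, λ_c) = (−3/2, 3/2).) -/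
/-- Reflection/time-reversal symmetry of the planar rate-induced tipping system
about `(x_c, λ_c) = (−λ_max/2, λ_max/2)`: if `(x, ℓ)` solves `x' = (x + ℓ)² − 1`,
`ℓ' = ε·ℓ·(λ_max − ℓ)`, then `X(t) = −λ_max − x(−t)`, `L(t) = λ_max − ℓ(−t)` solves the same
system. -/
theorem planar_system_reflection_symmetry (lmax eps : ℝ) (hlmax : 0 < lmax) (heps : 0 < eps)
    (x l : ℝ → ℝ)
    (hx : ∀ t, HasDerivAt x ((x t + l t) ^ 2 - 1) t)
    (hl : ∀ t, HasDerivAt l (eps * l t * (lmax - l t)) t) :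
    (∀ t, HasDerivAt (fun s => -lmax - x (-s))
        (((-lmax - x (-t)) + (lmax - l (-t))) ^ 2 - 1) t) ∧
    (∀ t, HasDerivAt (fun s => lmax - l (-s))
        (eps * (lmax - l (-t)) * (lmax - (lmax - l (-t)))) t) := by
  constructor
  · intro t
    have h1 : HasDerivAt (fun s => x (-s)) (((x (-t) + l (-t)) ^ 2 - 1) * (-1)) t :=
      (hx (-t)).comp t (hasDerivAt_neg t)
    have h2 : HasDerivAt (fun s => -lmax - x (-s)) (0 - ((x (-t) + l (-t)) ^ 2 - 1) * (-1)) t :=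
      (hasDerivAt_const (x := t) (c := -lmax)).sub h1
    convert h2 using 1
    ring
  · intro t
    have h1 : HasDerivAt (fun s => l (-s)) ((eps * l (-t) * (lmax - l (-t))) * (-1)) t :=
      (hl (-t)).comp t (hasDerivAt_neg t)
    have h2 : HasDerivAt (fun s => lmax - l (-s)) (0 - (eps * l (-t) * (lmax - l (-t))) * (-1)) t :=
      (hasDerivAt_const (x := t) (c := lmax)).sub h1
    convert h2 using 1
    ring
end

section
/- At the critical ramp speed ε_c = 4/3 with ramp height λ_max = 3, the line x = −λ/3 − 1 is invariant for the planar rate-induced tipping system: if λ(t) = (3/2)·(tanh(2t) + 1) is the ramp with λ_max = 3 and ε = 4/3, then the function x(t) := −λ(t)/3 − 1 satisfies x'(t) = (x(t) + λ(t))² − 1 for all t ∈ ℝ. -/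
lemma hasDerivAt_tanh' (t : ℝ) :
    HasDerivAt Real.tanh (1 - Real.tanh t ^ 2) t := by
  have h : HasDerivAt Real.tanh
      ((Real.cosh t * Real.cosh t - Real.sinh t * Real.sinh t) / Real.cosh t ^ 2) t := by
    have := (Real.hasDerivAt_sinh t).div (Real.hasDerivAt_cosh t) (Real.cosh_pos t).ne'
    rw [show Real.sinh / Real.cosh = Real.tanh from funext fun y => (Real.tanh_eq_sinh_div_cosh y).symm] at this
    exact this
  convert h using 1
  have hc := (Real.cosh_pos t).ne'
  rw [Real.tanh_eq_sinh_div_cosh]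
  field_simp

/-- At the critical ramp speed `ε_c = 4/3` with `λ_max = 3`, the line
`x = −λ/3 − 1` is invariant: with `λ(t) = (3/2)·(tanh(2t) + 1)`, the function
`x(t) = −λ(t)/3 − 1` satisfies `x'(t) = (x(t) + λ(t))² − 1` for all `t`. -/
theorem invariant_line_critical_rate
    (lam : ℝ → ℝ) (hlam : ∀ t, lam t = 3 / 2 * (Real.tanh (2 * t) + 1))
    (x : ℝ → ℝ) (hx : ∀ t, x t = -lam t / 3 - 1) :
    ∀ t, HasDerivAt x ((x t + lam t) ^ 2 - 1) t := by
  intro t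
  have hx' : x = fun s => -(1/2) * Real.tanh (2 * s) - 3/2 := by
    funext s; rw [hx, hlam]; ring
  have h2 : HasDerivAt (fun s : ℝ => 2 * s) 2 t := by
    simpa using (hasDerivAt_id t).const_mul 2
  have h := ((hasDerivAt_tanh' (2 * t)).comp t h2).const_mul (-(1/2) : ℝ)
  rw [hx']
  refine (h.sub_const (3/2)).congr_deriv ?_
  simp only [hlam t]
  ring
end

section
/- At ε = ε_c = 4/3 and λ_max = 3 the invariant line forms a heteroclinic connection between the two saddles: the solution (x(t), λ(t)) = (−λ(t)/3 − 1, λ(t)) of the planar rate-induced tipping system, where λ(t) = (3/2)·(tanh(2t) + 1), converges to the saddle S₋ = (−1, 0) as t → −∞ and to the saddle U₊ = (−2, 3) as t → +∞. -/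
open Filter

private lemma lam_exp (t : ℝ) :
    3 / 2 * (Real.tanh (2 * t) + 1) = 3 * Real.exp (4 * t) / (Real.exp (4 * t) + 1) := by
  have h1 : Real.tanh (2 * t)
      = ((Real.exp (2 * t) - Real.exp (-(2 * t))) / 2)
        / ((Real.exp (2 * t) + Real.exp (-(2 * t))) / 2) := by
    rw [Real.tanh_eq_sinh_div_cosh, Real.sinh_eq, Real.cosh_eq]
  have ha : (0:ℝ) < Real.exp (2 * t) := Real.exp_pos _
  have hb : (0:ℝ) < Real.exp (-(2 * t)) := Real.exp_pos _
  have h4 : Real.exp (4 * t) = Real.exp (2 * t) * Real.exp (2 * t) := by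
    rw [← Real.exp_add]; ring_nf
  have hinv : Real.exp (-(2 * t)) * Real.exp (2 * t) = 1 := by
    rw [← Real.exp_add]; simp
  rw [h1, h4]
  field_simp
  nlinarith [ha, hb, hinv]

private lemma exp_deriv (t : ℝ) :
    HasDerivAt (fun s : ℝ => Real.exp (4 * s)) (4 * Real.exp (4 * t)) t := by
  have := (Real.hasDerivAt_exp (4 * t)).comp t ((hasDerivAt_id t).const_mul 4)
  simpa [Function.comp_def, mul_comm] using this

/-- At `ε = ε_c = 4/3`, `λ_max = 3`, the invariant line forms a heteroclinic
connection between the two saddles: the solution `(x(t), λ(t)) = (−λ(t)/3 − 1, λ(t))` of the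
planar rate-induced tipping system, with `λ(t) = (3/2)·(tanh(2t) + 1)`, converges to
`S₋ = (−1, 0)` as `t → −∞` and to `U₊ = (−2, 3)` as `t → +∞`. -/
theorem heteroclinic_connection_critical_rate
    (lam : ℝ → ℝ) (hlam : ∀ t, lam t = 3 / 2 * (Real.tanh (2 * t) + 1))
    (x : ℝ → ℝ) (hx : ∀ t, x t = -lam t / 3 - 1) :
    (∀ t, HasDerivAt x ((x t + lam t) ^ 2 - 1) t) ∧
    (∀ t, HasDerivAt lam (4 / 3 * lam t * (3 - lam t)) t) ∧
    Tendsto (fun t => (x t, lam t)) atBot (nhds ((-1 : ℝ), (0 : ℝ))) ∧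
    Tendsto (fun t => (x t, lam t)) atTop (nhds ((-2 : ℝ), (3 : ℝ))) := by
  have hlam' : ∀ t, lam t = 3 * Real.exp (4 * t) / (Real.exp (4 * t) + 1) := fun t => by
    rw [hlam t, lam_exp]
  have hlamfun : lam = fun t => 3 * Real.exp (4 * t) / (Real.exp (4 * t) + 1) :=
    funext hlam'
  have hxfun : x = fun t => -(3 * Real.exp (4 * t) / (Real.exp (4 * t) + 1)) / 3 - 1 := by
    funext t; rw [hx t, hlam' t]
  have hEpos : ∀ t : ℝ, (0:ℝ) < Real.exp (4 * t) + 1 := fun t => by positivity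
  have hEne : ∀ t : ℝ, Real.exp (4 * t) + 1 ≠ 0 := fun t => (hEpos t).ne'
  -- derivative of lam
  have hdlam : ∀ t, HasDerivAt lam
      (12 * Real.exp (4 * t) / (Real.exp (4 * t) + 1) ^ 2) t := by
    intro t
    rw [hlamfun]
    have h := (((exp_deriv t).const_mul 3).div ((exp_deriv t).add_const 1) (hEne t))
    exact h.congr_deriv (by ring)
  have hdlam' : ∀ t, HasDerivAt lam (4 / 3 * lam t * (3 - lam t)) t := by
    intro t
    have h := hdlam t
    have : 4 / 3 * lam t * (3 - lam t)
        = 12 * Real.exp (4 * t) / (Real.exp (4 * t) + 1) ^ 2 := by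
      rw [hlam' t]; field_simp; ring
    rw [this]; exact h
  refine ⟨?_, hdlam', ?_, ?_⟩
  · -- derivative of x
    intro t
    have h : HasDerivAt x (-(4 / 3 * lam t * (3 - lam t)) / 3) t := by
      have := (((hdlam' t).neg).div_const 3).sub_const 1
      have hxeq : x = fun s => -lam s / 3 - 1 := funext hx
      rw [hxeq]
      simpa [neg_div] using this
    have : (x t + lam t) ^ 2 - 1 = -(4 / 3 * lam t * (3 - lam t)) / 3 := by
      rw [hx t]; ring
    rw [this]; exact h
  · -- t → -∞
    have hE0 : Tendsto (fun t : ℝ => Real.exp (4 * t)) atBot (nhds 0) := by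
      exact Real.tendsto_exp_atBot.comp (tendsto_atBot_atBot_of_monotone
        (fun a b hab => by linarith) (fun b => ⟨b / 4, by linarith⟩))
    have hcont : ContinuousAt (fun e : ℝ => 3 * e / (e + 1)) 0 := by
      apply ContinuousAt.div
      · fun_prop
      · fun_prop
      · norm_num
    have hl : Tendsto lam atBot (nhds 0) := by
      rw [hlamfun]
      have := hcont.tendsto.comp hE0
      simpa [Function.comp_def] using this
    have hxlim : Tendsto x atBot (nhds (-1)) := by
      have hxeq : x = fun s => -lam s / 3 - 1 := funext hx
      rw [hxeq]
      have := ((hl.neg).div_const 3).sub_const 1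
      convert this using 2
      norm_num
    exact hxlim.prodMk_nhds hl
  · -- t → +∞
    have hE0 : Tendsto (fun t : ℝ => Real.exp (-(4 * t))) atTop (nhds 0) := by
      exact Real.tendsto_exp_atBot.comp (tendsto_neg_atBot_iff.mpr
        (tendsto_atTop_atTop_of_monotone (fun a b hab => by linarith)
          (fun b => ⟨b / 4, by linarith⟩)))
    have hlamfun2 : lam = fun t => 3 / (1 + Real.exp (-(4 * t))) := by
      funext t
      rw [hlam' t]
      have h1 : Real.exp (-(4 * t)) * Real.exp (4 * t) = 1 := by
        rw [← Real.exp_add]; simp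
      have h2 : (0:ℝ) < 1 + Real.exp (-(4 * t)) := by positivity
      field_simp
      nlinarith [h1]
    have hcont : ContinuousAt (fun e : ℝ => 3 / (1 + e)) 0 := by
      apply ContinuousAt.div
      · fun_prop
      · fun_prop
      · norm_num
    have hl : Tendsto lam atTop (nhds 3) := by
      rw [hlamfun2]
      have := hcont.tendsto.comp hE0
      simpa [Function.comp_def] using this
    have hxlim : Tendsto x atTop (nhds (-2)) := by
      have hxeq : x = fun s => -lam s / 3 - 1 := funext hx
      rw [hxeq]
      have := ((hl.neg).div_const 3).sub_const 1
      convert this using 2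
      norm_num
    exact hxlim.prodMk_nhds hl
end

section
/- For the autonomous scalar ODE with frozen parameter, all initial conditions below the unstable equilibrium converge to the stable equilibrium: fix λ ∈ ℝ and let x : [0, ∞) → ℝ be differentiable with x'(t) = (x(t) + λ)² − 1 for all t ≥ 0 and x(0) < −λ + 1; then x(t) → −λ − 1 as t → ∞. -/
open Filter Real Set

/-- Helper: a scalar function on `[0, b]` with right derivatives bounded linearly by itself
and vanishing at `0` vanishes at `b`. -/
lemma vanish_of_deriv_le {f f' : ℝ → ℝ} {b K : ℝ} (hb : 0 ≤ b)
    (hf : ContinuousOn f (Set.Icc 0 b))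
    (hf' : ∀ t ∈ Set.Ico 0 b, HasDerivWithinAt f (f' t) (Set.Ici t) t)
    (h0 : f 0 = 0)
    (bound : ∀ t ∈ Set.Ico 0 b, ‖f' t‖ ≤ K * ‖f t‖) : f b = 0 := by
  have := norm_le_gronwallBound_of_norm_deriv_right_le (δ := 0) (K := K) (ε := 0)
    hf hf' (by simp [h0]) (fun t ht => by simpa using bound t ht) b ⟨hb, le_refl b⟩
  rw [gronwallBound_ε0_δ0] at this
  exact norm_le_zero_iff.mp this

/-- For the frozen-parameter scalar ODE `x' = (x + λ)² − 1`, all initial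
conditions below the unstable equilibrium converge to the stable equilibrium: if
`x : [0, ∞) → ℝ` is differentiable with `x'(t) = (x(t) + λ)² − 1` for all `t ≥ 0` and
`x(0) < −λ + 1`, then `x(t) → −λ − 1` as `t → ∞`. -/
theorem frozen_ode_convergence_to_stable_equilibrium (l : ℝ) (x : ℝ → ℝ)
    (hx : ∀ t, 0 ≤ t → HasDerivAt x ((x t + l) ^ 2 - 1) t)
    (hx0 : x 0 < -l + 1) :
    Tendsto x atTop (nhds (-l - 1)) := by
  set y : ℝ → ℝ := fun t => x t + l with hy_def
  have hy : ∀ t, 0 ≤ t → HasDerivAt y ((y t) ^ 2 - 1) t := fun t ht =>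
    (hx t ht).add_const l
  have hy0 : y 0 < 1 := by simp [hy_def]; linarith
  have hycont : ∀ t, 0 ≤ t → ContinuousAt y t := fun t ht => (hy t ht).continuousAt
  -- Step 1: y t < 1 for all t ≥ 0
  have hlt1 : ∀ t, 0 ≤ t → y t < 1 := by
    intro t ht
    by_contra hge
    push_neg at hge
    -- IVT gives t₀ with y t₀ = 1
    have hcont : ContinuousOn y (Set.Icc 0 t) := fun s hs =>
      (hycont s hs.1).continuousWithinAt
    have hIVT : (1 : ℝ) ∈ Set.Icc (y 0) (y t) := ⟨le_of_lt hy0, hge⟩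
    obtain ⟨t₀, ht₀mem, ht₀⟩ := intermediate_value_Icc ht hcont hIVT
    have ht₀pos : 0 < t₀ := by
      rcases lt_or_eq_of_le ht₀mem.1 with h | h
      · exact h
      · exfalso; rw [← h] at ht₀; linarith
    -- backward Gronwall on [0, t₀] with w s = 1 - y (t₀ - s)
    set w : ℝ → ℝ := fun s => 1 - y (t₀ - s) with hw_def
    have hwderiv : ∀ s ∈ Set.Icc 0 t₀, HasDerivAt w ((y (t₀ - s))^2 - 1) s := by
      intro s hs
      have h1 : (0:ℝ) ≤ t₀ - s := by linarith [hs.2]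
      have h2 : HasDerivAt (fun s : ℝ => t₀ - s) (-1) s := by
        simpa using (hasDerivAt_id s).const_sub t₀
      have h3 := ((hy (t₀ - s) h1).comp s h2)
      have h4 : HasDerivAt (fun s => y (t₀ - s)) (-((y (t₀ - s))^2 - 1)) s := by
        rw [show -((y (t₀ - s))^2 - 1) = ((y (t₀ - s))^2 - 1) * -1 by ring]; exact h3
      simpa [hw_def] using h4.const_sub 1
    have hwcont : ContinuousOn w (Set.Icc 0 t₀) := fun s hs =>
      ((hwderiv s hs).continuousAt).continuousWithinAt
    -- bound on [0, t₀]
    obtain ⟨C, hC⟩ := (isCompact_Icc (a := (0:ℝ)) (b := t₀)).exists_bound_of_continuousOn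
      (f := fun s => 1 + y (t₀ - s)) (by
        apply ContinuousOn.add continuousOn_const
        intro s hs
        exact ((hycont (t₀ - s) (by linarith [hs.2])).comp
          (by fun_prop : Continuous fun s : ℝ => t₀ - s).continuousAt).continuousWithinAt)
    have hw0 : w 0 = 0 := by simp [hw_def, ht₀]
    have hwt₀ : w t₀ = 0 := by
      apply vanish_of_deriv_le (f' := fun s => (y (t₀ - s))^2 - 1) (K := C) (le_of_lt ht₀pos)
        hwcont (fun s hs => (hwderiv s (Set.Ico_subset_Icc_self hs)).hasDerivWithinAt) hw0
      intro s hs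
      have hmem : s ∈ Set.Icc 0 t₀ := Set.Ico_subset_Icc_self hs
      have h1 := hC s hmem
      have : (y (t₀ - s))^2 - 1 = -(w s) * (1 + y (t₀ - s)) := by
        simp [hw_def]; ring
      rw [this]
      rw [norm_mul]
      calc ‖-(w s)‖ * ‖1 + y (t₀ - s)‖ ≤ ‖w s‖ * C := by
            rw [norm_neg]; exact mul_le_mul_of_nonneg_left h1 (norm_nonneg _)
        _ = C * ‖w s‖ := mul_comm _ _
    simp [hw_def] at hwt₀
    linarith
  have hne : ∀ t, 0 ≤ t → 1 - y t ≠ 0 := fun t ht => by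
    have := hlt1 t ht; intro h; linarith
  -- Step 2: u = (1+y)/(1-y) satisfies u' = -2u
  set u : ℝ → ℝ := fun t => (1 + y t) / (1 - y t) with hu_def
  have hu : ∀ t, 0 ≤ t → HasDerivAt u (-2 * u t) t := by
    intro t ht
    have h1 : HasDerivAt (fun t => 1 + y t) ((y t)^2 - 1) t := (hy t ht).const_add 1
    have h2 : HasDerivAt (fun t => 1 - y t) (-((y t)^2 - 1)) t := by
      simpa using (hy t ht).const_sub 1
    have h3 := h1.div h2 (hne t ht)
    refine h3.congr_deriv (Eq.symm ?_)
    have h4 := hne t ht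
    simp only [hu_def]
    field_simp
    ring
  -- Step 3: u t = u 0 * exp (-2 t)
  have hueq : ∀ t, 0 ≤ t → u t = u 0 * Real.exp (-2 * t) := by
    intro b hb
    set d : ℝ → ℝ := fun t => u t - u 0 * Real.exp (-2 * t) with hd_def
    have hdderiv : ∀ t ∈ Set.Icc 0 b, HasDerivAt d (-2 * d t) t := by
      intro t ht
      have h0 : HasDerivAt (fun s : ℝ => -2 * s) (-2) t := by
        simpa using (hasDerivAt_id t).const_mul (-2)
      have hexp : HasDerivAt (fun s : ℝ => Real.exp (-2 * s)) (Real.exp (-2 * t) * -2) t := by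
        exact h0.exp
      have h1 := hexp.const_mul (u 0)
      have h2 := (hu t ht.1).sub h1
      refine h2.congr_deriv (Eq.symm ?_)
      show -2 * (u t - u 0 * Real.exp (-2 * t)) = -2 * u t - u 0 * (Real.exp (-2 * t) * -2)
      ring
    have : d b = 0 := by
      apply vanish_of_deriv_le (f' := fun t => -2 * d t) (K := 2) hb
        (fun t ht => (hdderiv t ht).continuousAt.continuousWithinAt)
        (fun t ht => (hdderiv t (Set.Ico_subset_Icc_self ht)).hasDerivWithinAt)
        (by simp [hd_def])
      intro t _
      rw [norm_mul]
      simp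
    simpa [hd_def, sub_eq_zero] using this
  -- Step 4: u 0 > -1
  have hu0 : u 0 > -1 := by
    have h1 : 0 < 1 - y 0 := by linarith
    rw [hu_def]
    rw [gt_iff_lt, lt_div_iff₀ h1]
    linarith
  -- Step 5: u t + 1 > 0
  have hupos : ∀ t, 0 ≤ t → 0 < u t + 1 := by
    intro t ht
    rw [hueq t ht]
    have he1 : Real.exp (-2 * t) ≤ 1 := Real.exp_le_one_iff.mpr (by linarith)
    have he2 : 0 < Real.exp (-2 * t) := Real.exp_pos _
    rcases le_or_gt 0 (u 0) with h | h
    · nlinarith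
    · nlinarith
  -- Step 6: y t = (u t - 1)/(u t + 1)
  have hyeq : ∀ t, 0 ≤ t → y t = (u t - 1) / (u t + 1) := by
    intro t ht
    have h1 := hne t ht
    have h2 := (hupos t ht).ne'
    rw [hu_def] at h2 ⊢
    field_simp
    field_simp at h2
    ring
  -- Step 7: conclude
  have hxeq : ∀ᶠ t in atTop, x t = (u 0 * Real.exp (-2 * t) - 1) / (u 0 * Real.exp (-2 * t) + 1) - l := by
    filter_upwards [eventually_ge_atTop (0:ℝ)] with t ht
    have := hyeq t ht
    rw [hueq t ht] at this
    have : x t = y t - l := by simp [hy_def]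
    rw [this, hyeq t ht, hueq t ht]
  have hlim : Tendsto (fun t => (u 0 * Real.exp (-2 * t) - 1) / (u 0 * Real.exp (-2 * t) + 1) - l)
      atTop (nhds (-l - 1)) := by
    have h1 : Tendsto (fun t : ℝ => u 0 * Real.exp (-2 * t)) atTop (nhds 0) := by
      have : Tendsto (fun t : ℝ => -2 * t) atTop atBot :=
        (tendsto_const_mul_atBot_of_neg (by norm_num)).mpr tendsto_id
      simpa using (Real.tendsto_exp_atBot.comp this).const_mul (u 0)
    have h2 : Tendsto (fun t : ℝ => (u 0 * Real.exp (-2 * t) - 1) / (u 0 * Real.exp (-2 * t) + 1))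
        atTop (nhds ((0 - 1)/(0 + 1))) := by
      apply Tendsto.div (h1.sub_const 1) (h1.add_const 1) (by norm_num)
    have h3 := h2.sub_const l
    convert h3 using 2
    ring
  exact hlim.congr' (Filter.EventuallyEq.symm hxeq)
end
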